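/- Let V be a finite-dimensional complex vector space, S semisimple and N nilpotent endomorphisms of V with [S,N] = 0, and T = exp(2πi(S+N)). If the eigenvalues of S lie in the half-open interval (α−1, α] for some real α, then the pair (S,N) is uniquely determined by T: namely S is determined by the eigenvalues of T (each eigenvalue of T has the form e^{2πiβ} for a unique β ∈ (α−1, α], and S acts by β on the corresponding generalized eigenspace of T), and N = (1/2πi)·log of the unipotent part of T. -/

import Mathlib

open NormedSpace Matrix
open scoped Nat

namespace Stmt7

variable {n : ℕ}

lemma exp_eq_sum {A : Matrix (Fin n) (Fin n) ℂ} {m : ℕ} (h : A ^ m = 0) :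
    exp A = ∑ k ∈ Finset.range m, (k !⁻¹ : ℂ) • A ^ k := by
  rw [exp_eq_tsum (𝕂 := ℂ)]
  refine tsum_eq_sum (fun k hk => ?_)
  rw [Finset.mem_range, not_lt] at hk
  rw [← Nat.sub_add_cancel hk, pow_add, h, mul_zero, smul_zero]

lemma exp_mulVec_of_kernel {A : Matrix (Fin n) (Fin n) ℂ} {x : Fin n → ℂ}
    (h : A *ᵥ x = 0) : exp A *ᵥ x = x := by
  letI : SeminormedRing (Matrix (Fin n) (Fin n) ℂ) := Matrix.linftyOpSemiNormedRing
  letI : NormedRing (Matrix (Fin n) (Fin n) ℂ) := Matrix.linftyOpNormedRing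
  letI : NormedAlgebra ℂ (Matrix (Fin n) (Fin n) ℂ) := Matrix.linftyOpNormedAlgebra
  have hs : Summable (fun k : ℕ => (k !⁻¹ : ℂ) • A ^ k) := expSeries_summable' A
  let L : Matrix (Fin n) (Fin n) ℂ →ₗ[ℂ] (Fin n → ℂ) :=
    { toFun := fun B => B *ᵥ x
      map_add' := fun B C => Matrix.add_mulVec B C x
      map_smul' := fun c B => smul_mulVec c B x }
  let Lc : Matrix (Fin n) (Fin n) ℂ →L[ℂ] (Fin n → ℂ) :=
    ⟨L, LinearMap.continuous_of_finiteDimensional L⟩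
  have h0 : ∀ k : ℕ, k ≠ 0 → A ^ k *ᵥ x = 0 := by
    intro k hk
    obtain ⟨j, rfl⟩ := Nat.exists_eq_succ_of_ne_zero hk
    rw [pow_succ, ← mulVec_mulVec, h, mulVec_zero]
  calc exp A *ᵥ x = Lc (∑' k : ℕ, (k !⁻¹ : ℂ) • A ^ k) := by rw [exp_eq_tsum (𝕂 := ℂ)]; rfl
    _ = ∑' k : ℕ, Lc ((k !⁻¹ : ℂ) • A ^ k) := Lc.map_tsum hs
    _ = ∑' k : ℕ, (k !⁻¹ : ℂ) • (A ^ k *ᵥ x) := by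
        refine tsum_congr fun k => ?_
        simp [Lc, L, smul_mulVec]
    _ = ∑ k ∈ ({0} : Finset ℕ), (k !⁻¹ : ℂ) • (A ^ k *ᵥ x) := by
        refine tsum_eq_sum (fun k hk => ?_)
        rw [h0 k (by simpa using hk), smul_zero]
    _ = x := by simp

lemma exp_smul_one (z : ℂ) :
    exp (z • (1 : Matrix (Fin n) (Fin n) ℂ)) = Complex.exp z • 1 := by
  letI : SeminormedRing (Matrix (Fin n) (Fin n) ℂ) := Matrix.linftyOpSemiNormedRing
  letI : NormedRing (Matrix (Fin n) (Fin n) ℂ) := Matrix.linftyOpNormedRing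
  letI : NormedAlgebra ℂ (Matrix (Fin n) (Fin n) ℂ) := Matrix.linftyOpNormedAlgebra
  have h1 : z • (1 : Matrix (Fin n) (Fin n) ℂ) = algebraMap ℂ _ z :=
    (Algebra.algebraMap_eq_smul_one z).symm
  rw [h1, ← Algebra.algebraMap_eq_smul_one, Complex.exp_eq_exp_ℂ]
  exact (algebraMap_exp_comm (𝕂 := ℂ) (𝔸 := Matrix (Fin n) (Fin n) ℂ) z).symm

/-- exp applied to an eigenvector -/
lemma exp_mulVec_eigen {S : Matrix (Fin n) (Fin n) ℂ} {x : Fin n → ℂ} {μ c : ℂ}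
    (hx : S *ᵥ x = μ • x) : exp (c • S) *ᵥ x = Complex.exp (c * μ) • x := by
  have hsplit : c • S = (c * μ) • (1 : Matrix (Fin n) (Fin n) ℂ) + (c • S - (c * μ) • 1) := by
    abel
  have hcomm : Commute ((c * μ) • (1 : Matrix (Fin n) (Fin n) ℂ)) (c • S - (c * μ) • 1) :=
    ((Commute.one_left _).smul_left _)
  rw [hsplit, Matrix.exp_add_of_commute _ _ hcomm, exp_smul_one]
  have hker : (c • S - (c * μ) • 1) *ᵥ x = 0 := by
    rw [Matrix.sub_mulVec, smul_mulVec, smul_mulVec, hx, one_mulVec,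
      smul_smul, sub_self]
  rw [smul_mul_assoc, one_mul, smul_mulVec, exp_mulVec_of_kernel hker]

lemma csmul {R : Type*} [CommRing R] [Algebra ℂ R] (c : ℂ) (p : Polynomial R) :
    c • p = Polynomial.C (algebraMap ℂ R c) * p := by
  ext t
  rw [Polynomial.coeff_smul, Polynomial.coeff_C_mul, Algebra.smul_def]

open Polynomial in
lemma log_exp_comm {R : Type*} [CommRing R] [Algebra ℂ R] (a : R) (m : ℕ)
    (hm : a ^ (m + 1) = 0) :
    ∑ j ∈ Finset.range (m + 1), ((-1 : ℂ) ^ j / (j + 1)) •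
      ((∑ j ∈ Finset.range (m + 1), (j !⁻¹ : ℂ) • a ^ j) - 1) ^ (j + 1) = a := by
  set M := m + 1 with hM
  -- the truncated exponential polynomial
  set e : R[X] := ∑ j ∈ Finset.range M, C ((j !⁻¹ : ℂ) • a ^ j) * X ^ j with he_def
  have he : ∀ t, e.coeff t = if t < M then ((t)!⁻¹ : ℂ) • a ^ t else 0 := by
    intro t
    rw [he_def, Polynomial.finset_sum_coeff]
    simp only [Polynomial.coeff_C_mul, Polynomial.coeff_X_pow, mul_ite, mul_one, mul_zero]
    rw [Finset.sum_ite_eq (Finset.range M) t]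
    simp [Finset.mem_range]
  -- derivative of e
  have hder : derivative e = C a * e := by
    ext t
    rw [Polynomial.coeff_derivative, Polynomial.coeff_C_mul, he, he]
    by_cases h1 : t + 1 < M
    · have h2 : t < M := Nat.lt_of_succ_lt h1
      rw [if_pos h1, if_pos h2]
      have : ((t : R) + 1) = ((t + 1 : ℕ) : R) := by push_cast; ring
      rw [this, mul_comm, ← nsmul_eq_mul, ← Nat.cast_smul_eq_nsmul ℂ, smul_smul,
        mul_smul_comm, ← pow_succ']
      have h0 : ((t + 1 : ℕ) : ℂ) ≠ 0 := by exact_mod_cast Nat.succ_ne_zero t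
      have hfac : ((t + 1 : ℕ) : ℂ) * (((t + 1)! : ℕ) : ℂ)⁻¹ = ((t ! : ℕ) : ℂ)⁻¹ := by
        rw [Nat.factorial_succ, Nat.cast_mul, mul_inv, ← mul_assoc, mul_inv_cancel₀ h0, one_mul]
      rw [hfac]
    · rw [if_neg h1]
      by_cases h2 : t < M
      · have h3 : M = t + 1 := by omega
        rw [if_pos h2, mul_smul_comm, ← pow_succ', ← h3, hm, smul_zero, zero_mul]
      · rw [if_neg h2, mul_zero, zero_mul]
  -- (e - 1) is divisible by a
  have hsplit : e - 1 = C a * ∑ j ∈ Finset.range m, C (((j + 1)!⁻¹ : ℂ) • a ^ j) * X ^ (j + 1) := by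
    rw [he_def, hM, Finset.sum_range_succ']
    simp only [Nat.factorial_zero, Nat.cast_one, inv_one, pow_zero, one_smul, Polynomial.C_1,
      one_mul, add_sub_cancel_right]
    rw [Finset.mul_sum]
    refine Finset.sum_congr rfl fun j _ => ?_
    rw [← mul_assoc, ← Polynomial.C_mul, mul_smul_comm, ← pow_succ']
  have hgm : (e - 1) ^ M = 0 := by
    rw [hsplit, mul_pow, ← Polynomial.C_pow, hm, Polynomial.C_0, zero_mul]
  have heval0 : e.eval 0 = 1 := by
    rw [← Polynomial.coeff_zero_eq_eval_zero, he]
    simp [hM]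
  -- the truncated logarithm of e
  set F : R[X] := ∑ j ∈ Finset.range M, ((-1 : ℂ) ^ j / (j + 1)) • (e - 1) ^ (j + 1) with hF_def
  have hgeom : (∑ j ∈ Finset.range M, (1 - e) ^ j) * e = 1 := by
    have h := geom_sum_mul (1 - e) M
    have h2 : (1 - e) ^ M = 0 := by
      rw [← neg_sub e 1, neg_pow, hgm, mul_zero]
    rw [h2] at h
    have h3 : (1 - e) - 1 = -e := by ring
    rw [h3] at h
    have := congrArg Neg.neg h
    simp only [neg_neg, zero_sub, mul_neg] at this ⊢
    linear_combination this
  have hFder : derivative F = C a := by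
    rw [hF_def, Polynomial.derivative_sum]
    have hterm : ∀ j ∈ Finset.range M, derivative (((-1 : ℂ) ^ j / (j + 1)) • (e - 1) ^ (j + 1))
        = (1 - e) ^ j * (C a * e) := by
      intro j _
      rw [Polynomial.derivative_smul, Polynomial.derivative_pow, Polynomial.derivative_sub,
        Polynomial.derivative_one, sub_zero, hder]
      rw [csmul]
      have hc : (C ((j + 1 : ℕ) : R) : R[X]) = C (algebraMap ℂ R ((j + 1 : ℕ) : ℂ)) := by
        rw [map_natCast (algebraMap ℂ R)]
      have hj0 : ((j + 1 : ℕ) : ℂ) ≠ 0 := by exact_mod_cast Nat.succ_ne_zero j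
      calc C (algebraMap ℂ R ((-1 : ℂ) ^ j / (j + 1))) *
            (C (((j+1) : ℕ) : R) * (e - 1) ^ (j + 1 - 1) * (C a * e))
          = (C (algebraMap ℂ R ((-1 : ℂ) ^ j / (j + 1))) * C (algebraMap ℂ R ((j + 1 : ℕ) : ℂ)))
              * ((e - 1) ^ j * (C a * e)) := by rw [hc, Nat.add_sub_cancel]; ring
        _ = C (algebraMap ℂ R (((-1 : ℂ) ^ j / (j + 1)) * ((j + 1 : ℕ) : ℂ)))
              * ((e - 1) ^ j * (C a * e)) := by rw [← Polynomial.C_mul, ← _root_.map_mul]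
        _ = C (algebraMap ℂ R ((-1 : ℂ) ^ j)) * ((e - 1) ^ j * (C a * e)) := by
              have hjc : ((-1 : ℂ) ^ j / ((j : ℂ) + 1)) * ((j + 1 : ℕ) : ℂ) = (-1 : ℂ) ^ j := by
                have hne : ((j : ℂ) + 1) ≠ 0 := by
                  exact_mod_cast (Nat.cast_add_one_ne_zero j : ((j : ℂ) + 1) ≠ 0)
                push_cast
                field_simp
              rw [hjc]
        _ = ((-1 : ℂ) ^ j) • ((e - 1) ^ j * (C a * e)) := by rw [csmul]
        _ = (((-1 : ℂ) • (e - 1)) ^ j) * (C a * e) := by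
              rw [_root_.smul_pow, smul_mul_assoc]
        _ = (1 - e) ^ j * (C a * e) := by rw [neg_smul, one_smul, neg_sub]
    rw [Finset.sum_congr rfl hterm, ← Finset.sum_mul]
    calc (∑ j ∈ Finset.range M, (1 - e) ^ j) * (C a * e)
        = C a * ((∑ j ∈ Finset.range M, (1 - e) ^ j) * e) := by ring
      _ = C a := by rw [hgeom, mul_one]
  have hF0 : F.eval 0 = 0 := by
    rw [hF_def]
    rw [Polynomial.eval_finset_sum]
    refine Finset.sum_eq_zero fun j _ => ?_
    rw [csmul, Polynomial.eval_mul, Polynomial.eval_pow, Polynomial.eval_sub,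
      Polynomial.eval_one, heval0, sub_self, zero_pow (Nat.succ_ne_zero j), mul_zero]
  -- conclude F = C a * X
  have hFX : F = C a * X := by
    have hG : derivative (F - C a * X) = 0 := by
      rw [Polynomial.derivative_sub, hFder, Polynomial.derivative_C_mul_X, sub_self]
    have hcancel : ∀ x : R, ∀ t : ℕ, x * ((t : R) + 1) = 0 → x = 0 := by
      intro x t hx
      have h1 : ((t + 1 : ℕ) : ℂ) • x = 0 := by
        rw [Nat.cast_smul_eq_nsmul, nsmul_eq_mul, mul_comm]
        convert hx using 2
        push_cast; ring
      have h0 : ((t + 1 : ℕ) : ℂ) ≠ 0 := by exact_mod_cast Nat.succ_ne_zero t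
      calc x = (((t + 1 : ℕ) : ℂ))⁻¹ • (((t + 1 : ℕ) : ℂ) • x) := by
              rw [smul_smul, inv_mul_cancel₀ h0, one_smul]
        _ = 0 := by rw [h1, smul_zero]
    have hzero : F - C a * X = 0 := by
      ext t
      rcases t with _ | t
      · simp only [Polynomial.coeff_sub, Polynomial.coeff_zero]
        rw [Polynomial.coeff_zero_eq_eval_zero, Polynomial.coeff_zero_eq_eval_zero, hF0]
        simp
      · have := congrArg (fun p => Polynomial.coeff p t) hG
        simp only [Polynomial.coeff_derivative, Polynomial.coeff_zero] at this
        rw [Polynomial.coeff_zero]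
        exact hcancel _ t this
    exact sub_eq_zero.mp hzero
  -- evaluate at 1
  have he1 : e.eval 1 = ∑ j ∈ Finset.range M, (j !⁻¹ : ℂ) • a ^ j := by
    rw [he_def, Polynomial.eval_finset_sum]
    refine Finset.sum_congr rfl fun j _ => ?_
    rw [Polynomial.eval_mul, Polynomial.eval_C, Polynomial.eval_pow, Polynomial.eval_X,
      one_pow, mul_one]
  have heval1 : ∀ j : ℕ, Polynomial.eval 1 (((-1 : ℂ) ^ j / (j + 1)) • (e - 1) ^ (j + 1))
      = ((-1 : ℂ) ^ j / (j + 1)) •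
        ((∑ i ∈ Finset.range M, (i !⁻¹ : ℂ) • a ^ i) - 1) ^ (j + 1) := by
    intro j
    rw [csmul, Polynomial.eval_mul, Polynomial.eval_C, Polynomial.eval_pow, Polynomial.eval_sub,
      Polynomial.eval_one, he1, ← Algebra.smul_def]
  have hfin := congrArg (Polynomial.eval 1) hFX
  rw [hF_def, Polynomial.eval_finset_sum] at hfin
  simp only [heval1] at hfin
  rw [Polynomial.eval_mul, Polynomial.eval_C, Polynomial.eval_X, mul_one] at hfin
  exact hfin


/-- the matrix `A` is recovered from `exp A` when `A` is nilpotent -/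
lemma eq_log_exp {A : Matrix (Fin n) (Fin n) ℂ} {m : ℕ} (hA : A ^ (m + 1) = 0) :
    A = ∑ j ∈ Finset.range (m + 1), ((-1 : ℂ) ^ j / (j + 1)) • (exp A - 1) ^ (j + 1) := by
  letI : CommRing (Algebra.adjoin ℂ ({A} : Set (Matrix (Fin n) (Fin n) ℂ))) :=
    Algebra.adjoinCommRingOfComm ℂ (by
      rintro x hx y hy
      rw [Set.mem_singleton_iff] at hx hy
      rw [hx, hy])
  set a : Algebra.adjoin ℂ ({A} : Set (Matrix (Fin n) (Fin n) ℂ)) :=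
    ⟨A, Algebra.self_mem_adjoin_singleton ℂ A⟩ with ha_def
  have ha : a ^ (m + 1) = 0 := by
    ext : 1
    push_cast [ha_def]
    exact hA
  have key := log_exp_comm a m ha
  have hval := congrArg (Subalgebra.val _) key
  rw [map_sum] at hval
  simp only [_root_.map_smul, map_pow, map_sub, map_sum, _root_.map_one] at hval
  have hv1 : (Algebra.adjoin ℂ ({A} : Set (Matrix (Fin n) (Fin n) ℂ))).val a = A := rfl
  have hv2 : ∀ j : ℕ, (Algebra.adjoin ℂ ({A} : Set (Matrix (Fin n) (Fin n) ℂ))).val (a ^ j)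
      = A ^ j := fun j => by rw [map_pow, hv1]
  simp only [hv1, hv2] at hval
  rw [← exp_eq_sum hA] at hval
  exact hval.symm

lemma exp_injOn_nilpotent {A B : Matrix (Fin n) (Fin n) ℂ}
    (hA : IsNilpotent A) (hB : IsNilpotent B) (h : exp A = exp B) : A = B := by
  obtain ⟨p, hp⟩ := hA
  obtain ⟨q, hq⟩ := hB
  have hpow : ∀ (C : Matrix (Fin n) (Fin n) ℂ) (r s : ℕ), C ^ r = 0 → r ≤ s → C ^ s = 0 := by
    intro C r s hr hrs
    rw [← Nat.sub_add_cancel hrs, pow_add, hr, mul_zero]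
  have hA' : A ^ (p + q + 1) = 0 := hpow A p _ hp (by omega)
  have hB' : B ^ (p + q + 1) = 0 := hpow B q _ hq (by omega)
  have e1 := eq_log_exp hA'
  have e2 := eq_log_exp hB'
  rw [h] at e1
  exact e1.trans e2.symm

lemma eigen_mulVec {S M : Matrix (Fin n) (Fin n) ℂ} {μ : ℂ} (h : Commute S M)
    {x : Fin n → ℂ} (hx : S *ᵥ x = μ • x) : S *ᵥ (M *ᵥ x) = μ • (M *ᵥ x) := by
  rw [mulVec_mulVec, h.eq, ← mulVec_mulVec, hx, mulVec_smul]

lemma key_induction {T D S : Matrix (Fin n) (Fin n) ℂ} {μ z : ℂ}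
    (hSD : Commute S D)
    (hT : ∀ y : Fin n → ℂ, S *ᵥ y = μ • y → (T - z • 1) *ᵥ y = z • (D *ᵥ y)) :
    ∀ (k : ℕ) (x : Fin n → ℂ), S *ᵥ x = μ • x →
      ((T - z • 1) ^ k) *ᵥ x = z ^ k • (D ^ k *ᵥ x) := by
  intro k
  induction k with
  | zero => intro x hx; simp
  | succ k ih =>
    intro x hx
    have hDx : S *ᵥ (D *ᵥ x) = μ • (D *ᵥ x) := eigen_mulVec hSD hx
    rw [pow_succ, ← mulVec_mulVec, hT x hx, mulVec_smul, ih _ hDx,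
      mulVec_mulVec, ← pow_succ, smul_smul, ← pow_succ']

/-- translation between matrix powers and `Module.End` powers -/
lemma toLin'_sub_smul_pow (A : Matrix (Fin n) (Fin n) ℂ) (z : ℂ) (k : ℕ) :
    (Matrix.toLin' A - z • (1 : Module.End ℂ (Fin n → ℂ))) ^ k
      = Matrix.toLin' ((A - z • 1) ^ k) := by
  have h1 : Matrix.toLin' A - z • (1 : Module.End ℂ (Fin n → ℂ))
      = Matrix.toLin' (A - z • 1) := by
    rw [map_sub, _root_.map_smul]
    congr 1
    ext x i
    simp [Matrix.toLin'_apply, Matrix.one_mulVec]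
  rw [h1]
  induction k with
  | zero =>
    ext x i
    simp [Matrix.toLin'_apply, Matrix.one_mulVec]
  | succ k ih =>
    rw [pow_succ, pow_succ, ih]
    ext x i
    simp [Module.End.mul_apply, Matrix.toLin'_apply, Matrix.mulVec_mulVec]

/-- main claim: eigenspaces of `S` sit inside generalized eigenspaces of
`exp (c S) * exp (c N)`. -/
lemma mem_maxGen {S N : Matrix (Fin n) (Fin n) ℂ} (hSN : Commute S N)
    (hN : IsNilpotent N) (c : ℂ) {μ : ℂ} {x : Fin n → ℂ}
    (hx : Matrix.toLin' S x = μ • x) :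
    x ∈ Module.End.maxGenEigenspace
      (Matrix.toLin' (exp (c • S) * exp (c • N))) (Complex.exp (c * μ)) := by
  obtain ⟨m, hm⟩ := hN
  have hx' : S *ᵥ x = μ • x := by rwa [Matrix.toLin'_apply] at hx
  set T := exp (c • S) * exp (c • N) with hT_def
  set z := Complex.exp (c * μ) with hz_def
  set D := exp (c • N) - 1 with hD_def
  have hNm : N ^ (m + 1) = 0 := by rw [pow_succ, hm, zero_mul]
  have hcNm : (c • N) ^ (m + 1) = 0 := by rw [smul_pow, hNm, smul_zero]
  have hW : D = N * ∑ k ∈ Finset.range m, (((k+1)!⁻¹ : ℂ) * c ^ (k+1)) • N ^ k := by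
    rw [hD_def, exp_eq_sum hcNm, Finset.sum_range_succ']
    simp only [pow_zero, Nat.factorial_zero, Nat.cast_one, inv_one, one_smul,
      add_sub_cancel_right]
    rw [Finset.mul_sum]
    refine Finset.sum_congr rfl fun k _ => ?_
    rw [smul_pow, smul_smul, mul_smul_comm, ← pow_succ', mul_comm ((((k+1):ℕ)! : ℂ))⁻¹]
  have hNW : Commute N (∑ k ∈ Finset.range m, (((k+1)!⁻¹ : ℂ) * c ^ (k+1)) • N ^ k) :=
    Finset.sum_induction _ _ (fun p q hp hq => Commute.add_right hp hq)
      (Commute.zero_right N) (fun k _ => ((Commute.refl N).pow_right k).smul_right _)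
  have hDnil : D ^ (m + 1) = 0 := by
    rw [hW, hNW.mul_pow, hNm, zero_mul]
  have hSexpN : Commute S (exp (c • N)) := ((hSN.smul_right c).exp_right)
  have hSD : Commute S D := hSexpN.sub_right (Commute.one_right S)
  have hTfact : ∀ y : Fin n → ℂ, S *ᵥ y = μ • y → (T - z • 1) *ᵥ y = z • (D *ᵥ y) := by
    intro y hy
    have hy2 : S *ᵥ (exp (c • N) *ᵥ y) = μ • (exp (c • N) *ᵥ y) :=
      eigen_mulVec hSexpN hy
    rw [sub_mulVec, smul_mulVec, one_mulVec, hT_def, ← mulVec_mulVec,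
      exp_mulVec_eigen hy2, hD_def, sub_mulVec, one_mulVec, smul_sub]
  have hfin := key_induction hSD hTfact (m+1) x hx'
  rw [hDnil, zero_mulVec, smul_zero] at hfin
  rw [Module.End.mem_maxGenEigenspace]
  refine ⟨m+1, ?_⟩
  rw [toLin'_sub_smul_pow, Matrix.toLin'_apply]
  exact hfin

/-- abstract lattice lemma -/
lemma eig_le {E E' : ℝ → Submodule ℂ (Fin n → ℂ)} {G : ℂ → Submodule ℂ (Fin n → ℂ)}
    {P : ℝ → Prop} {z : ℝ → ℂ}
    (hG : iSupIndep G) (hz : ∀ μ, P μ → ∀ ν, P ν → z μ = z ν → μ = ν)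
    (hE : ∀ μ, P μ → E μ ≤ G (z μ)) (hE' : ∀ μ, P μ → E' μ ≤ G (z μ))
    (htop : (⨆ μ, ⨆ _ : P μ, E μ) = ⊤) :
    ∀ μ, P μ → E' μ ≤ E μ := by
  intro μ hμ x hx
  have hxG : x ∈ G (z μ) := hE' μ hμ hx
  set R := ⨆ ν, ⨆ _ : P ν ∧ ν ≠ μ, G (z ν) with hR
  have h1 : (⊤ : Submodule ℂ (Fin n → ℂ)) ≤ E μ ⊔ R := by
    rw [← htop]
    refine iSup_le fun ν => iSup_le fun hν => ?_
    by_cases hνμ : ν = μ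
    · subst hνμ; exact le_sup_left
    · refine le_sup_of_le_right (le_trans (hE ν hν) ?_)
      exact le_iSup₂ (f := fun ν _ => G (z ν)) ν ⟨hν, hνμ⟩
  have h2 : R ⊓ G (z μ) = ⊥ := by
    have hRle : R ≤ ⨆ w, ⨆ _ : w ≠ z μ, G w := by
      refine iSup_le fun ν => iSup_le fun hν => ?_
      refine le_iSup₂ (f := fun w _ => G w) (z ν) ?_
      intro hzz
      exact hν.2 (hz ν hν.1 μ hμ hzz)
    have hd := hG (z μ)
    rw [eq_bot_iff]
    calc R ⊓ G (z μ) ≤ (⨆ w, ⨆ _ : w ≠ z μ, G w) ⊓ G (z μ) :=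
          inf_le_inf_right _ hRle
      _ = ⊥ := by rw [inf_comm]; exact hd.eq_bot
  have h3 : x ∈ (E μ ⊔ R) ⊓ G (z μ) := ⟨h1 trivial, hxG⟩
  rw [sup_inf_assoc_of_le R (hE μ hμ), h2, sup_bot_eq] at h3
  exact h3

lemma exp_ioc_inj {α μ ν : ℝ} (hμ : μ ∈ Set.Ioc (α - 1) α) (hν : ν ∈ Set.Ioc (α - 1) α)
    (h : Complex.exp (((2 * Real.pi : ℝ) : ℂ) * Complex.I * μ)
       = Complex.exp (((2 * Real.pi : ℝ) : ℂ) * Complex.I * ν)) : μ = ν := by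
  rw [Complex.exp_eq_exp_iff_exists_int] at h
  obtain ⟨k, hk⟩ := h
  have h2 : ((2 * Real.pi : ℝ) : ℂ) * Complex.I ≠ 0 := by
    apply mul_ne_zero _ Complex.I_ne_zero
    simp [Real.pi_ne_zero]
  have hμν : (μ : ℂ) = ν + k := by
    apply mul_left_cancel₀ h2
    rw [hk]
    push_cast
    ring
  have hr : μ = ν + k := by exact_mod_cast hμν
  have hk1 : (k : ℝ) < 1 := by
    have := hμ.2; have := hν.1; simp only [hr] at *; linarith
  have hk2 : (-1 : ℝ) < k := by
    have := hμ.1; have := hν.2; simp only [hr] at *; linarith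
  have : k = 0 := by
    have l1 : k < 1 := by exact_mod_cast hk1
    have l2 : -1 < k := by exact_mod_cast hk2
    omega
  rw [hr, this]
  simp

end Stmt7



open NormedSpace Matrix Stmt7



/-- if `T = exp(2πi(S+N))` with `S` diagonalizable with (real) eigenvalues in
`(α-1, α]`, `N` nilpotent and `[S,N] = 0`, then the pair `(S, N)` is uniquely determined
by `T`. -/
theorem stmt7 (n : ℕ) (α : ℝ) (S N S' N' : Matrix (Fin n) (Fin n) ℂ)
    (hSN : Commute S N) (hSN' : Commute S' N')
    (hN : IsNilpotent N) (hN' : IsNilpotent N')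
    (hS : (⨆ μ : ℝ, ⨆ _ : μ ∈ Set.Ioc (α - 1) α,
      Module.End.eigenspace (Matrix.toLin' S) (μ : ℂ)) = ⊤)
    (hS' : (⨆ μ : ℝ, ⨆ _ : μ ∈ Set.Ioc (α - 1) α,
      Module.End.eigenspace (Matrix.toLin' S') (μ : ℂ)) = ⊤)
    (hT : NormedSpace.exp (((2 * Real.pi : ℝ) * Complex.I) • (S + N))
        = NormedSpace.exp (((2 * Real.pi : ℝ) * Complex.I) • (S' + N'))) :
    S = S' ∧ N = N' := by
  set c : ℂ := ((2 * Real.pi : ℝ) : ℂ) * Complex.I with hc_def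
  have hc : c ≠ 0 := by
    apply mul_ne_zero _ Complex.I_ne_zero
    simp [Real.pi_ne_zero]
  have hfac : exp (c • (S + N)) = exp (c • S) * exp (c • N) := by
    rw [smul_add]
    exact Matrix.exp_add_of_commute _ _ ((hSN.smul_left c).smul_right c)
  have hfac' : exp (c • (S' + N')) = exp (c • S') * exp (c • N') := by
    rw [smul_add]
    exact Matrix.exp_add_of_commute _ _ ((hSN'.smul_left c).smul_right c)
  have hT2 : exp (c • S) * exp (c • N) = exp (c • S') * exp (c • N') := by
    rw [← hfac, ← hfac']
    exact hT
  have hGind := Module.End.independent_maxGenEigenspace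
    (Matrix.toLin' (exp (c • S) * exp (c • N)))
  have hz : ∀ μ : ℝ, μ ∈ Set.Ioc (α - 1) α → ∀ ν : ℝ, ν ∈ Set.Ioc (α - 1) α →
      Complex.exp (c * μ) = Complex.exp (c * ν) → μ = ν := fun μ hμ ν hν h =>
    exp_ioc_inj hμ hν h
  have hE : ∀ μ : ℝ, μ ∈ Set.Ioc (α - 1) α →
      Module.End.eigenspace (Matrix.toLin' S) (μ : ℂ) ≤
      Module.End.maxGenEigenspace
        (Matrix.toLin' (exp (c • S) * exp (c • N))) (Complex.exp (c * μ)) := by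
    intro μ _ x hx
    exact mem_maxGen hSN hN c (Module.End.mem_eigenspace_iff.mp hx)
  have hE' : ∀ μ : ℝ, μ ∈ Set.Ioc (α - 1) α →
      Module.End.eigenspace (Matrix.toLin' S') (μ : ℂ) ≤
      Module.End.maxGenEigenspace
        (Matrix.toLin' (exp (c • S) * exp (c • N))) (Complex.exp (c * μ)) := by
    intro μ _ x hx
    rw [hT2]
    exact mem_maxGen hSN' hN' c (Module.End.mem_eigenspace_iff.mp hx)
  have hle := eig_le hGind hz hE hE' hS
  have hle' := eig_le hGind hz hE' hE hS'
  have hSS : S = S' := by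
    have hker : ⊤ ≤ LinearMap.ker (Matrix.toLin' (S - S')) := by
      rw [← hS]
      refine iSup_le fun μ => iSup_le fun hμ => fun x hx => ?_
      have h1 : Matrix.toLin' S x = (μ : ℂ) • x := Module.End.mem_eigenspace_iff.mp hx
      have h2 : Matrix.toLin' S' x = (μ : ℂ) • x :=
        Module.End.mem_eigenspace_iff.mp (hle' μ hμ hx)
      rw [LinearMap.mem_ker, map_sub, LinearMap.sub_apply, h1, h2, sub_self]
    have h0 : Matrix.toLin' (S - S') = 0 := LinearMap.ker_eq_top.mp (eq_top_iff.mpr hker)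
    have := Matrix.toLin'.injective (by rw [h0, map_zero] :
      Matrix.toLin' (S - S') = Matrix.toLin' (0 : Matrix (Fin n) (Fin n) ℂ))
    exact sub_eq_zero.mp this
  refine ⟨hSS, ?_⟩
  rw [← hSS] at hT2
  have hu : IsUnit (exp (c • S)) := Matrix.isUnit_exp _
  have hNN : exp (c • N) = exp (c • N') := hu.mul_left_cancel hT2
  have hnil : ∀ M : Matrix (Fin n) (Fin n) ℂ, IsNilpotent M → IsNilpotent (c • M) := by
    rintro M ⟨k, hk⟩
    exact ⟨k, by rw [smul_pow, hk, smul_zero]⟩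
  have hcNN : c • N = c • N' := exp_injOn_nilpotent (hnil N hN) (hnil N' hN') hNN
  exact smul_right_injective _ hc hcNN
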